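/- Let 0 < α < β and let A : C_α(ℝ) → C_β(ℝ) be a bounded linear operator, i.e. there is M ≥ 0 with |Af|_β ≤ M|f|_α for all f ∈ C_α(ℝ). For r > 0 let B_r = {f ∈ C_α(ℝ) : |f|_α < r}. Suppose that for every r > 0 and every X > 0 the family of restrictions {(Af)|_{[-X,X]} : f ∈ B_r} is uniformly equicontinuous. Then A, viewed as an operator from C_α(ℝ) to C_α(ℝ) (via the inclusion C_β(ℝ) ⊆ C_α(ℝ)), is a compact operator: the image under A of every bounded subset of C_α(ℝ) is relatively compact in the |·|_α-norm; equivalently, every |·|_α-bounded sequence (f_n) has a subsequence (f_{n_j}) such that (Af_{n_j}) converges in the |·|_α-norm. -/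

import Mathlib

open Filter Topology

/-- The weighted sup "norm" `|f|_α = sup_x (1+|x|)^α ‖f x‖` on `C_α(ℝ)`. -/
noncomputable def anorm (α : ℝ) (f : ℝ → ℂ) : ℝ :=
  ⨆ x : ℝ, (1 + |x|) ^ α * ‖f x‖

set_option maxHeartbeats 1000000
set_option synthInstance.maxHeartbeats 1000000

/-- Let `0 < α < β` and let `A : C_α(ℝ) → C_β(ℝ)` be a bounded linear
operator.  If for every `r > 0` and `X > 0` the image of the ball `B_r` restricted to
`[-X, X]` is uniformly equicontinuous, then `A : C_α(ℝ) → C_α(ℝ)` is compact: every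
`|·|_α`-bounded sequence `(f_n)` has a subsequence `(f_{n_j})` with `(A f_{n_j})`
converging in the `|·|_α`-norm. -/
theorem compactness_criterion_weighted_spaces (α β : ℝ) (hα : 0 < α) (hαβ : α < β)
    (A : (ℝ → ℂ) →ₗ[ℂ] (ℝ → ℂ)) (M : ℝ)
    (hbd : ∀ f : ℝ → ℂ, Continuous f →
      BddAbove (Set.range fun x => (1 + |x|) ^ α * ‖f x‖) →
      Continuous (A f) ∧ ∀ x : ℝ, (1 + |x|) ^ β * ‖A f x‖ ≤ M * anorm α f)
    (hequi : ∀ r > (0 : ℝ), ∀ X > (0 : ℝ), ∀ ε > (0 : ℝ), ∃ δ > (0 : ℝ),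
      ∀ f : ℝ → ℂ, Continuous f →
        BddAbove (Set.range fun x => (1 + |x|) ^ α * ‖f x‖) →
        anorm α f < r →
        ∀ x ∈ Set.Icc (-X) X, ∀ y ∈ Set.Icc (-X) X, |x - y| < δ →
          ‖A f x - A f y‖ < ε) :
    ∀ (f : ℕ → ℝ → ℂ) (r : ℝ),
      (∀ n, Continuous (f n)) →
      (∀ n x, (1 + |x|) ^ α * ‖f n x‖ ≤ r) →
      ∃ n : ℕ → ℕ, StrictMono n ∧ ∃ g : ℝ → ℂ,
        ∀ ε > (0 : ℝ), ∃ N : ℕ, ∀ j ≥ N, ∀ x : ℝ,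
          (1 + |x|) ^ α * ‖A (f (n j)) x - g x‖ ≤ ε := by
  intro f r hc hbound
  -- the weight function
  set w : ℝ → ℝ := fun x => (1 + |x|) ^ α with hw_def
  have h1x : ∀ x : ℝ, (0:ℝ) < 1 + |x| := fun x => by positivity
  have hw_pos : ∀ x, 0 < w x := fun x => Real.rpow_pos_of_pos (h1x x) α
  have hw_one : ∀ x, 1 ≤ w x := by
    intro x
    have := Real.rpow_le_rpow zero_le_one (by linarith [abs_nonneg x] : (1:ℝ) ≤ 1 + |x|) hα.le
    simpa using this
  have hw_cont : Continuous w := by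
    apply Continuous.rpow_const (by continuity)
    intro x; exact Or.inr hα.le
  have hr0 : 0 ≤ r := le_trans (by positivity) (hbound 0 0)
  have hBdd : ∀ n, BddAbove (Set.range fun x => (1 + |x|) ^ α * ‖f n x‖) :=
    fun n => ⟨r, by rintro _ ⟨x, rfl⟩; exact hbound n x⟩
  have ha_le : ∀ n, anorm α (f n) ≤ r := fun n => ciSup_le (hbound n)
  have ha_nonneg : ∀ n, 0 ≤ anorm α (f n) := fun n =>
    le_trans (by positivity) (le_ciSup (hBdd n) 0)
  set C : ℝ := |M| * r with hC_def
  have hC0 : 0 ≤ C := mul_nonneg (abs_nonneg M) hr0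
  set F : ℕ → ℝ → ℂ := fun n => A (f n) with hF_def
  have hFc : ∀ n, Continuous (F n) := fun n => (hbd (f n) (hc n) (hBdd n)).1
  have hFb : ∀ n x, (1 + |x|) ^ β * ‖F n x‖ ≤ C := by
    intro n x
    calc (1 + |x|) ^ β * ‖F n x‖ ≤ M * anorm α (f n) := (hbd (f n) (hc n) (hBdd n)).2 x
    _ ≤ |M| * anorm α (f n) := mul_le_mul_of_nonneg_right (le_abs_self M) (ha_nonneg n)
    _ ≤ |M| * r := mul_le_mul_of_nonneg_left (ha_le n) (abs_nonneg M)
  have hwF : ∀ n x, w x * ‖F n x‖ ≤ C * (1 + |x|) ^ (α - β) := by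
    intro n x
    have hsplit : w x = (1 + |x|) ^ (α - β) * (1 + |x|) ^ β := by
      rw [← Real.rpow_add (h1x x)]; ring_nf; rfl
    rw [hsplit, mul_assoc, mul_comm C _]
    exact mul_le_mul_of_nonneg_left (hFb n x) (Real.rpow_nonneg (h1x x).le _)
  have htail1 : ∀ x : ℝ, (1 + |x|) ^ (α - β) ≤ 1 := fun x =>
    Real.rpow_le_one_of_one_le_of_nonpos (by linarith [abs_nonneg x]) (by linarith)
  have hwFC : ∀ n x, w x * ‖F n x‖ ≤ C := by
    intro n x
    refine (hwF n x).trans ?_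
    calc C * (1 + |x|) ^ (α - β) ≤ C * 1 := mul_le_mul_of_nonneg_left (htail1 x) hC0
    _ = C := mul_one C
  have hFC : ∀ n x, ‖F n x‖ ≤ C := by
    intro n x
    calc ‖F n x‖ = 1 * ‖F n x‖ := (one_mul _).symm
    _ ≤ w x * ‖F n x‖ := mul_le_mul_of_nonneg_right (hw_one x) (norm_nonneg _)
    _ ≤ C := hwFC n x
  set G : ℕ → ℝ → ℂ := fun n x => w x • F n x with hG_def
  have hGnorm : ∀ n x, ‖G n x‖ = w x * ‖F n x‖ := by
    intro n x
    show ‖w x • F n x‖ = _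
    rw [norm_smul, Real.norm_eq_abs, abs_of_pos (hw_pos x)]
  have hGc : ∀ n, Continuous (G n) := fun n => hw_cont.smul (hFc n)
  have hGC : ∀ n x, ‖G n x‖ ≤ C := fun n x => (hGnorm n x).le.trans (hwFC n x)
  have hGtail : ∀ n x, ‖G n x‖ ≤ C * (1 + |x|) ^ (α - β) := fun n x =>
    (hGnorm n x).le.trans (hwF n x)
  -- the restrictions as bounded continuous functions
  set Φ : ℕ → ∀ k : ℕ, BoundedContinuousFunction (Set.Icc (-((k:ℝ)+1)) ((k:ℝ)+1)) ℂ :=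
    fun n k => BoundedContinuousFunction.ofNormedAddCommGroup (fun t => G n t)
      ((hGc n).comp continuous_subtype_val) C (fun t => hGC n t) with hΦ_def
  have hΦ_app : ∀ (n k : ℕ) (t : Set.Icc (-((k:ℝ)+1)) ((k:ℝ)+1)), Φ n k t = G n ↑t := fun n k t => rfl
  -- equicontinuity on each interval
  have hEq : ∀ k : ℕ, Equicontinuous (fun n => (Φ n k : Set.Icc (-((k:ℝ)+1)) ((k:ℝ)+1) → ℂ)) := by
    intro k t
    rw [Metric.equicontinuousAt_iff]
    intro ε hε
    set Wk : ℝ := (1 + ((k:ℝ)+1)) ^ α with hWk_def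
    have hWk1 : 1 ≤ Wk := by
      have := Real.rpow_le_rpow zero_le_one (by linarith [show (0:ℝ) ≤ (k:ℝ) from Nat.cast_nonneg k] : (1:ℝ) ≤ 1 + ((k:ℝ)+1)) hα.le
      simpa using this
    have hWk0 : 0 < Wk := lt_of_lt_of_le one_pos hWk1
    have habs : ∀ s : Set.Icc (-((k:ℝ)+1)) ((k:ℝ)+1), |(s:ℝ)| ≤ (k:ℝ)+1 := fun s =>
      abs_le.mpr ⟨s.2.1, s.2.2⟩
    have hwle : ∀ s : Set.Icc (-((k:ℝ)+1)) ((k:ℝ)+1), w s ≤ Wk := by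
      intro s
      exact Real.rpow_le_rpow (h1x _).le (by linarith [habs s]) hα.le
    obtain ⟨δ₁, hδ₁, hδ⟩ := hequi (r+1) (by linarith) ((k:ℝ)+1) (by positivity)
      (ε/(2*Wk)) (div_pos hε (mul_pos two_pos hWk0))
    obtain ⟨δ₂, hδ₂, hδw⟩ := Metric.continuousAt_iff.1 (hw_cont.continuousAt (x := (t:ℝ)))
      (ε/(2*(C+1))) (by positivity)
    refine ⟨min δ₁ δ₂, lt_min hδ₁ hδ₂, ?_⟩
    intro y hy n
    have hyt : |(y:ℝ) - (t:ℝ)| < min δ₁ δ₂ := by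
      rwa [Subtype.dist_eq, Real.dist_eq] at hy
    have hF_close : ‖F n ↑t - F n ↑y‖ < ε/(2*Wk) := by
      apply hδ (f n) (hc n) (hBdd n) (lt_of_le_of_lt (ha_le n) (by linarith))
        ↑t ⟨t.2.1, t.2.2⟩ ↑y ⟨y.2.1, y.2.2⟩
      rw [abs_sub_comm]
      exact lt_of_lt_of_le hyt (min_le_left _ _)
    have hw_close : |w ↑t - w ↑y| < ε/(2*(C+1)) := by
      have := hδw (x := (y:ℝ)) (by rw [Real.dist_eq]; exact lt_of_lt_of_le hyt (min_le_right _ _))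
      rwa [Real.dist_eq, abs_sub_comm] at this
    rw [hΦ_app, hΦ_app, dist_eq_norm]
    have hdecomp : G n ↑t - G n ↑y = w ↑t • (F n ↑t - F n ↑y) + (w ↑t - w ↑y) • F n ↑y := by
      show w ↑t • F n ↑t - w ↑y • F n ↑y = _
      module
    calc ‖G n ↑t - G n ↑y‖ ≤ ‖w ↑t • (F n ↑t - F n ↑y)‖ + ‖(w ↑t - w ↑y) • F n ↑y‖ := by
          rw [hdecomp]; exact norm_add_le _ _
    _ = w ↑t * ‖F n ↑t - F n ↑y‖ + |w ↑t - w ↑y| * ‖F n ↑y‖ := by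
          rw [norm_smul, norm_smul, Real.norm_eq_abs, Real.norm_eq_abs, abs_of_pos (hw_pos _)]
    _ < ε := by
          have h1 : w ↑t * ‖F n ↑t - F n ↑y‖ ≤ Wk * (ε/(2*Wk)) :=
            mul_le_mul (hwle t) hF_close.le (norm_nonneg _) hWk0.le
          have h2 : |w ↑t - w ↑y| * ‖F n ↑y‖ ≤ (ε/(2*(C+1))) * C :=
            mul_le_mul hw_close.le (hFC n _) (norm_nonneg _) (by positivity)
          have e1 : Wk * (ε/(2*Wk)) = ε/2 := by field_simp
          have e2 : (ε/(2*(C+1))) * C < ε/2 := by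
            rw [div_mul_eq_mul_div, div_lt_div_iff₀ (by positivity) (by norm_num)]
            nlinarith
          linarith
  -- compactness of the closures, via Arzelà–Ascoli
  have hK : ∀ k : ℕ, IsCompact (closure (Set.range (fun n => Φ n k))) := by
    intro k
    apply BoundedContinuousFunction.arzela_ascoli (Metric.closedBall (0:ℂ) C)
      (isCompact_closedBall _ _)
    · rintro g t ⟨n, rfl⟩
      rw [Metric.mem_closedBall, dist_zero_right]
      exact hGC n t
    · have hcoe : ((↑) : (Set.range fun n => Φ n k) → (Set.Icc (-((k:ℝ)+1)) ((k:ℝ)+1)) → ℂ) =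
          (fun n => (Φ n k : Set.Icc (-((k:ℝ)+1)) ((k:ℝ)+1) → ℂ)) ∘ (fun g => g.2.choose) := by
        funext g
        exact congrArg _ g.2.choose_spec.symm
      rw [hcoe]
      exact (hEq k).comp _
  -- extract a convergent subsequence in the product
  have hKpi : IsCompact (Set.pi Set.univ (fun k => closure (Set.range fun n => Φ n k))) :=
    isCompact_univ_pi hK
  have hmem : ∀ n, (fun k => Φ n k) ∈ Set.pi Set.univ (fun k => closure (Set.range fun n => Φ n k)) :=
    fun n k _ => subset_closure ⟨n, rfl⟩
  obtain ⟨L, _, φ, hφmono, hφtend⟩ := hKpi.tendsto_subseq hmem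
  have hcoord : ∀ k, Tendsto (fun j => Φ (φ j) k) atTop (𝓝 (L k)) := fun k =>
    (tendsto_pi_nhds.mp hφtend) k
  have hpt : ∀ (k : ℕ) (x : ℝ) (hx : x ∈ Set.Icc (-((k:ℝ)+1)) ((k:ℝ)+1)),
      Tendsto (fun j => G (φ j) x) atTop (𝓝 (L k ⟨x, hx⟩)) := by
    intro k x hx
    exact (BoundedContinuousFunction.tendsto_iff_tendstoUniformly.mp (hcoord k)).tendsto_at ⟨x, hx⟩
  -- the limit function
  have hmemx : ∀ x : ℝ, x ∈ Set.Icc (-((⌈|x|⌉₊:ℝ)+1)) ((⌈|x|⌉₊:ℝ)+1) := by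
    intro x
    have h := Nat.le_ceil |x|
    have h2 := abs_le.mp (h.trans (by linarith : (⌈|x|⌉₊:ℝ) ≤ (⌈|x|⌉₊:ℝ)+1))
    exact ⟨h2.1, h2.2⟩
  set gG : ℝ → ℂ := fun x => L ⌈|x|⌉₊ ⟨x, hmemx x⟩ with hgG_def
  set g : ℝ → ℂ := fun x => (w x)⁻¹ • gG x with hg_def
  have hgpt : ∀ x, Tendsto (fun j => G (φ j) x) atTop (𝓝 (gG x)) := fun x =>
    hpt _ x (hmemx x)
  refine ⟨φ, hφmono, g, ?_⟩
  intro ε hε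
  -- choose the cutoff k
  have htend0 : Tendsto (fun k : ℕ => C * (1 + (k:ℝ)) ^ (α - β)) atTop (𝓝 0) := by
    have h1 : Tendsto (fun x : ℝ => x ^ (α - β)) atTop (𝓝 0) := by
      have := tendsto_rpow_neg_atTop (y := β - α) (by linarith)
      simpa [neg_sub] using this
    have h2 : Tendsto (fun k : ℕ => (1 + (k:ℝ))) atTop atTop :=
      tendsto_atTop_add_const_left _ 1 tendsto_natCast_atTop_atTop
    have := (h1.comp h2).const_mul C
    simpa using this
  obtain ⟨k, hk⟩ := (htend0.eventually (gt_mem_nhds (show (0:ℝ) < ε/3 by positivity))).exists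
  -- N from convergence in coordinate k
  obtain ⟨N, hN⟩ := (Metric.tendsto_atTop.mp (hcoord k)) (ε/3) (by positivity)
  -- uniform Cauchy estimate
  have hUC : ∀ i ≥ N, ∀ j ≥ N, ∀ x : ℝ, ‖G (φ i) x - G (φ j) x‖ ≤ 2*ε/3 := by
    intro i hi j hj x
    by_cases hx : |x| ≤ (k:ℝ)+1
    · have hxm : x ∈ Set.Icc (-((k:ℝ)+1)) ((k:ℝ)+1) := abs_le.mp hx
      have e : ‖G (φ i) x - G (φ j) x‖ = dist (Φ (φ i) k ⟨x, hxm⟩) (Φ (φ j) k ⟨x, hxm⟩) := by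
        rw [dist_eq_norm]; rfl
      rw [e]
      calc dist (Φ (φ i) k ⟨x, hxm⟩) (Φ (φ j) k ⟨x, hxm⟩)
          ≤ dist (Φ (φ i) k) (Φ (φ j) k) := BoundedContinuousFunction.dist_coe_le_dist _
      _ ≤ dist (Φ (φ i) k) (L k) + dist (Φ (φ j) k) (L k) := dist_triangle_right _ _ _
      _ ≤ ε/3 + ε/3 := add_le_add (hN i hi).le (hN j hj).le
      _ ≤ 2*ε/3 := by linarith
    · push_neg at hx
      have hxk : (1 + (k:ℝ)) ≤ 1 + |x| := by linarith
      have hb : ∀ m : ℕ, ‖G m x‖ ≤ C * (1 + (k:ℝ)) ^ (α - β) := by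
        intro m
        refine (hGtail m x).trans ?_
        exact mul_le_mul_of_nonneg_left
          (Real.rpow_le_rpow_of_nonpos (by positivity) hxk (by linarith)) hC0
      calc ‖G (φ i) x - G (φ j) x‖ ≤ ‖G (φ i) x‖ + ‖G (φ j) x‖ := norm_sub_le _ _
      _ ≤ C * (1 + (k:ℝ)) ^ (α - β) + C * (1 + (k:ℝ)) ^ (α - β) := add_le_add (hb _) (hb _)
      _ ≤ 2*ε/3 := by linarith
  refine ⟨N, ?_⟩
  intro j hj x
  have key : ‖G (φ j) x - gG x‖ ≤ 2*ε/3 := by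
    have htd : Tendsto (fun i => ‖G (φ j) x - G (φ i) x‖) atTop (𝓝 ‖G (φ j) x - gG x‖) :=
      (tendsto_const_nhds.sub (hgpt x)).norm
    apply le_of_tendsto htd
    filter_upwards [eventually_ge_atTop N] with i hi
    exact hUC j hj i hi x
  have hrw : (1 + |x|) ^ α * ‖A (f (φ j)) x - g x‖ = ‖G (φ j) x - gG x‖ := by
    have h1 : G (φ j) x - gG x = w x • (F (φ j) x - g x) := by
      have h2 : w x • g x = gG x := smul_inv_smul₀ (hw_pos x).ne' (gG x)
      show w x • F (φ j) x - gG x = _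
      rw [smul_sub, h2]
    rw [h1, norm_smul, Real.norm_eq_abs, abs_of_pos (hw_pos x)]
  linarith [key, hrw.le, hrw.ge]
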